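/- For the scalar ODE ẋ = −ρx − κ₁x^{γ₁} with ρ, κ₁ > 0, 0 < γ₁ < 1 (x ≥ 0, ẋ interpreted via odd powers), starting from x₀ with 0 ≤ x₀ ≤ 1, the time to reach 0 equals exactly (1/(ρ(1−γ₁))) ln(1 + (ρ/κ₁) x₀^{1−γ₁}). -/

import Mathlib

open Real Set Filter Topology

theorem stmt_17 (ρ κ₁ γ₁ : ℝ)
    (hρ : 0 < ρ) (hκ₁ : 0 < κ₁) (hγ₁0 : 0 < γ₁) (hγ₁1 : γ₁ < 1)
    (x : ℝ → ℝ) (x₀ : ℝ) (hx0 : x 0 = x₀) (hx₀0 : 0 ≤ x₀) (hx₀1 : x₀ ≤ 1)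
    (hnn : ∀ t, 0 ≤ t → 0 ≤ x t)
    (hode : ∀ t, 0 ≤ t → HasDerivAt x (-ρ * x t - κ₁ * x t ^ γ₁) t) :
    sInf {t : ℝ | 0 ≤ t ∧ x t = 0} =
      1 / (ρ * (1 - γ₁)) * Real.log (1 + ρ / κ₁ * x₀ ^ (1 - γ₁)) := by
  set β := 1 - γ₁ with hβ
  have hβ0 : 0 < β := by simp [hβ]; linarith
  set c := ρ * β with hc
  have hc0 : 0 < c := mul_pos hρ hβ0
  set z : ℝ → ℝ := fun t => (x t ^ β + κ₁ / ρ) * Real.exp (c * t) with hzdef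
  -- continuity of x on Ici 0
  have hxc : ∀ t : ℝ, 0 ≤ t → ContinuousAt x t := fun t ht => (hode t ht).continuousAt
  have hzc : ∀ t : ℝ, 0 ≤ t → ContinuousAt z t := by
    intro t ht
    exact (((hxc t ht).rpow_const (Or.inr hβ0.le)).add continuousAt_const).mul
      ((Real.continuous_exp.comp (continuous_const.mul continuous_id)).continuousAt)
  -- derivative of z is zero where x is positive
  have hzderiv : ∀ t : ℝ, 0 ≤ t → 0 < x t → HasDerivAt z 0 t := by
    intro t ht hxt
    have hx' := hode t ht
    have h1 : HasDerivAt (fun s => x s ^ β)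
        ((-ρ * x t - κ₁ * x t ^ γ₁) * β * x t ^ (β - 1)) t :=
      hx'.rpow_const (Or.inl (ne_of_gt hxt))
    have h2 : HasDerivAt (fun s : ℝ => Real.exp (c * s)) (Real.exp (c * t) * c) t := by
      simpa [mul_comm] using ((hasDerivAt_id t).const_mul c).exp
    have h3 := (h1.add_const (κ₁ / ρ)).mul h2
    have e1 : x t ^ (β - 1) * x t = x t ^ β := by
      nth_rewrite 2 [← Real.rpow_one (x t)]
      rw [← Real.rpow_add hxt]; norm_num
    have e2 : x t ^ (β - 1) * x t ^ γ₁ = 1 := by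
      rw [← Real.rpow_add hxt]
      have : β - 1 + γ₁ = 0 := by simp [hβ]
      rw [this, Real.rpow_zero]
    refine h3.congr_deriv ?_
    have hρ' : ρ ≠ 0 := ne_of_gt hρ
    have E := Real.exp_pos (c * t)
    rw [hc]
    field_simp
    linear_combination (-(β * Real.exp (ρ * β * t) * ρ)) * e1 +
      (-(β * Real.exp (ρ * β * t) * κ₁)) * e2
  -- z is constant on intervals where x is positive
  have hzconst : ∀ s : ℝ, 0 ≤ s → (∀ t, 0 ≤ t → t ≤ s → 0 < x t) → z s = z 0 := by
    intro s hs hpos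
    rcases eq_or_lt_of_le hs with rfl | hs'
    · rfl
    have hcont : ContinuousOn z (Icc 0 s) := fun t ht => (hzc t ht.1).continuousWithinAt
    have hder : ∀ t ∈ Ico (0:ℝ) s, HasDerivWithinAt z 0 (Ici t) t := fun t ht =>
      (hzderiv t ht.1 (hpos t ht.1 ht.2.le)).hasDerivWithinAt
    exact constant_of_has_deriv_right_zero hcont hder s (right_mem_Icc.2 hs)
  have hz0 : z 0 = x₀ ^ β + κ₁ / ρ := by simp [hzdef, hx0]
  -- main case split
  rcases eq_or_lt_of_le hx₀0 with h0 | h0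
  · -- x₀ = 0
    have hmem : (0:ℝ) ∈ {t : ℝ | 0 ≤ t ∧ x t = 0} := ⟨le_refl 0, by rw [hx0, ← h0]⟩
    have hlb : ∀ t ∈ {t : ℝ | 0 ≤ t ∧ x t = 0}, (0:ℝ) ≤ t := fun t ht => ht.1
    have : sInf {t : ℝ | 0 ≤ t ∧ x t = 0} = 0 :=
      le_antisymm (csInf_le ⟨0, hlb⟩ hmem) (le_csInf ⟨0, hmem⟩ hlb)
    rw [this, ← h0, Real.zero_rpow (ne_of_gt hβ0)]
    simp
  -- x₀ > 0
  have hbdd : BddBelow {t : ℝ | 0 ≤ t ∧ x t = 0} := ⟨0, fun t ht => ht.1⟩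
  have hSne : {t : ℝ | 0 ≤ t ∧ x t = 0}.Nonempty := by
    by_contra hempty
    simp only [Set.nonempty_def, not_exists, Set.mem_setOf_eq, not_and] at hempty
    have hpos : ∀ t : ℝ, 0 ≤ t → 0 < x t := fun t ht =>
      lt_of_le_of_ne (hnn t ht) (Ne.symm (hempty t ht))
    set K := (x₀ ^ β + κ₁ / ρ) * (ρ / κ₁) with hK
    have hK0 : 0 < K := by positivity
    set s := K / c with hs
    have hs0 : 0 < s := div_pos hK0 hc0
    have hzs : z s = z 0 := hzconst s hs0.le (fun t ht _ => hpos t ht)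
    have hexp : c * s < Real.exp (c * s) := by
      have := Real.add_one_lt_exp (ne_of_gt (mul_pos hc0 hs0))
      linarith
    have hcs : c * s = K := by rw [hs]; field_simp
    have hxs : (0:ℝ) ≤ x s ^ β := Real.rpow_nonneg (hnn s hs0.le) β
    have hz1 : κ₁ / ρ * Real.exp (c * s) ≤ z 0 := by
      rw [← hzs, hzdef]
      have := Real.exp_pos (c * s)
      nlinarith
    rw [hz0] at hz1
    have hKle : κ₁ / ρ * K = x₀ ^ β + κ₁ / ρ := by rw [hK]; field_simp
    have hlt : κ₁ / ρ * K < κ₁ / ρ * Real.exp (c * s) :=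
      mul_lt_mul_of_pos_left (by rw [← hcs]; exact hexp) (div_pos hκ₁ hρ)
    linarith
  set τ := sInf {t : ℝ | 0 ≤ t ∧ x t = 0} with hτdef
  have hτ0 : 0 ≤ τ := le_csInf hSne fun t ht => ht.1
  have hxτ : x τ = 0 := by
    have hcl : τ ∈ closure {t : ℝ | 0 ≤ t ∧ x t = 0} := csInf_mem_closure hSne hbdd
    rcases mem_closure_iff_seq_limit.1 hcl with ⟨u, hu, hlim⟩
    have h1 : Tendsto (fun n => x (u n)) atTop (𝓝 (x τ)) := (hxc τ hτ0).tendsto.comp hlim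
    have h2 : (fun n => x (u n)) = fun _ => (0:ℝ) := funext fun n => (hu n).2
    rw [h2] at h1
    exact tendsto_nhds_unique h1 tendsto_const_nhds
  have hpos : ∀ t : ℝ, 0 ≤ t → t < τ → 0 < x t := by
    intro t ht htτ
    rcases lt_or_eq_of_le (hnn t ht) with h | h
    · exact h
    · exact absurd ⟨ht, h.symm⟩ (notMem_of_lt_csInf htτ hbdd)
  have hτpos : 0 < τ := by
    rcases eq_or_lt_of_le hτ0 with h | h
    · exfalso; rw [← h] at hxτ; rw [hx0] at hxτ; linarith
    · exact h
  -- z τ = z 0 via continuity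
  have hzτ : z τ = z 0 := by
    have hne : (𝓝[Ico (0:ℝ) τ] τ).NeBot := by
      refine mem_closure_iff_nhdsWithin_neBot.1 ?_
      rw [closure_Ico (ne_of_lt hτpos)]
      exact right_mem_Icc.2 hτ0
    have h1 : Tendsto z (𝓝[Ico (0:ℝ) τ] τ) (𝓝 (z τ)) := (hzc τ hτ0).continuousWithinAt
    have h2 : Tendsto z (𝓝[Ico (0:ℝ) τ] τ) (𝓝 (z 0)) := by
      refine Tendsto.congr' ?_ tendsto_const_nhds
      filter_upwards [self_mem_nhdsWithin] with s hs
      exact (hzconst s hs.1 (fun t ht hts => hpos t ht (lt_of_le_of_lt hts hs.2))).symm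
    exact tendsto_nhds_unique h1 h2
  have hzτ' : κ₁ / ρ * Real.exp (c * τ) = x₀ ^ β + κ₁ / ρ := by
    rw [← hz0, ← hzτ, hzdef]
    simp [hxτ, Real.zero_rpow (ne_of_gt hβ0)]
  have hexp : Real.exp (c * τ) = 1 + ρ / κ₁ * x₀ ^ β := by
    field_simp at hzτ' ⊢
    nlinarith
  have hlog : Real.log (1 + ρ / κ₁ * x₀ ^ β) = c * τ := by
    rw [← hexp, Real.log_exp]
  rw [hlog]
  field_simp
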